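/- Let θ be an n×m real matrix of rank at most 2, and let ϑ be any n×m real matrix. Let ϑ₂ be a matrix of rank at most 2 closest to ϑ in Frobenius norm (i.e., best rank-2 approximation). Then ‖θ − ϑ₂‖₂² ≤ 16 ‖θ − ϑ‖², where ‖·‖₂ is the Frobenius norm and ‖·‖ the spectral norm. -/

import Mathlib

open scoped BigOperators

/-- Frobenius norm of a matrix. -/
noncomputable def frobNorm {n m : ℕ} (A : Matrix (Fin n) (Fin m) ℝ) : ℝ :=
  Real.sqrt (∑ i, ∑ j, (A i j) ^ 2)

/-- Spectral (operator) norm of a matrix. -/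
noncomputable def specNorm {n m : ℕ} (A : Matrix (Fin n) (Fin m) ℝ) : ℝ :=
  ⨆ x : {x : Fin m → ℝ // ∑ j, (x j) ^ 2 ≤ 1}, Real.sqrt (∑ i, (A.mulVec x.1 i) ^ 2)

namespace RankTwoApproxAux

open Submodule Matrix Module RealInnerProductSpace

section Geometry

variable {E : Type*} [NormedAddCommGroup E] [InnerProductSpace ℝ E] [FiniteDimensional ℝ E]

lemma norm_sub_proj_sq (S : Submodule ℝ E) (a c : E) (hc : c ∈ S) :
    ‖a - c‖ ^ 2 = ‖a - orthogonalProjection S a‖ ^ 2 +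
      ‖(orthogonalProjection S a : E) - c‖ ^ 2 := by
  have hdecomp : a - c = (a - orthogonalProjection S a) + ((orthogonalProjection S a : E) - c) := by
    abel
  have hmem1 : a - orthogonalProjection S a ∈ Sᗮ := sub_starProjection_mem_orthogonal a
  have hmem2 : (orthogonalProjection S a : E) - c ∈ S := sub_mem (coe_mem _) hc
  have hinner : ⟪a - orthogonalProjection S a, (orthogonalProjection S a : E) - c⟫ = 0 := by
    rw [real_inner_comm]
    exact (Submodule.mem_orthogonal S _).mp hmem1 _ hmem2
  rw [hdecomp, norm_add_sq_real, hinner]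
  ring

lemma norm_proj_sq_add (S : Submodule ℝ E) (a : E) :
    ‖a‖ ^ 2 = ‖(orthogonalProjection S a : E)‖ ^ 2 + ‖a - orthogonalProjection S a‖ ^ 2 := by
  have := norm_sub_proj_sq S a 0 (zero_mem S)
  simp only [sub_zero] at this
  linarith

lemma norm_proj_le (S : Submodule ℝ E) (a : E) :
    ‖(orthogonalProjection S a : E)‖ ≤ ‖a‖ := by
  have h := norm_proj_sq_add S a
  nlinarith [norm_nonneg ((orthogonalProjection S a : E)), norm_nonneg a,
    sq_nonneg ‖a - orthogonalProjection S a‖]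

lemma norm_proj_mono {S T : Submodule ℝ E} (h : S ≤ T) (a : E) :
    ‖(orthogonalProjection S a : E)‖ ≤ ‖(orthogonalProjection T a : E)‖ := by
  have h1 : orthogonalProjection S ((orthogonalProjection T a : E)) = orthogonalProjection S a :=
    orthogonalProjectionOnto_starProjection_of_le h a
  rw [← h1]
  exact norm_proj_le S _

lemma norm_proj_sq_eq_sum {ι : Type*} [Fintype ι] (S : Submodule ℝ E)
    (b : OrthonormalBasis ι ℝ S) (x : E) :
    ‖(orthogonalProjection S x : E)‖ ^ 2 = ∑ k, ⟪(b k : E), x⟫ ^ 2 := by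
  set u : S := orthogonalProjection S x with hu
  have h1 : ∀ k, ⟪b k, u⟫ = ⟪(b k : E), x⟫ := fun k => by
    rw [hu]
    exact inner_orthogonalProjection_eq_of_mem_left (K := S) (b k) x
  have h2 : (⟪u, u⟫) = ∑ k, ⟪u, b k⟫ * ⟪b k, u⟫ := (b.sum_inner_mul_inner u u).symm
  have h3 : ‖(u : E)‖ ^ 2 = ⟪u, u⟫ := by
    rw [Submodule.coe_inner]
    exact (real_inner_self_eq_norm_sq _).symm
  rw [h3, h2]
  refine Finset.sum_congr rfl fun k _ => ?_
  have e1 : ⟪u, b k⟫ = ⟪(b k : E), x⟫ := by rw [← h1 k]; exact real_inner_comm _ _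
  rw [e1, h1 k, sq]

lemma proj_inf_orthogonal_singleton (U : Submodule ℝ E) (x : E) (hx : x ∈ U) (hx1 : ‖x‖ = 1)
    (r : E) :
    ((orthogonalProjection (U ⊓ (ℝ ∙ x)ᗮ) r : E)) =
      (orthogonalProjection U r : E) - ⟪x, r⟫ • x := by
  set c : ℝ := ⟪x, r⟫ with hc
  set u : E := (orthogonalProjection U r : E) with huu
  have hxu : ⟪x, u⟫ = c := by
    have := inner_orthogonalProjection_eq_of_mem_left (K := U) ⟨x, hx⟩ r
    rw [Submodule.coe_inner] at this
    exact this
  have hxx : ⟪x, x⟫ = 1 := by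
    rw [real_inner_self_eq_norm_sq, hx1]; norm_num
  show (U ⊓ (ℝ ∙ x)ᗮ).starProjection r = _
  apply eq_starProjection_of_mem_orthogonal
  · refine Submodule.mem_inf.mpr ⟨sub_mem (coe_mem _) (smul_mem _ _ hx), ?_⟩
    rw [mem_orthogonal_singleton_iff_inner_right]
    rw [inner_sub_right, real_inner_smul_right, hxu, hxx]
    ring
  · have hrw : r - (u - c • x) = (r - u) + c • x := by abel
    rw [hrw]
    refine add_mem ?_ ?_
    · exact Submodule.orthogonal_le inf_le_left (sub_starProjection_mem_orthogonal r)
    · refine smul_mem _ _ ?_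
      rw [Submodule.mem_orthogonal']
      intro w hw
      exact mem_orthogonal_singleton_iff_inner_right.mp (Submodule.mem_inf.mp hw).2

lemma norm_proj_split (U : Submodule ℝ E) (x : E) (hx : x ∈ U) (hx1 : ‖x‖ = 1) (r : E) :
    ‖(orthogonalProjection U r : E)‖ ^ 2 =
      ‖(orthogonalProjection (U ⊓ (ℝ ∙ x)ᗮ) r : E)‖ ^ 2 + ⟪x, r⟫ ^ 2 := by
  set c : ℝ := ⟪x, r⟫ with hc
  set u : E := (orthogonalProjection U r : E) with huu
  have hxu : ⟪x, u⟫ = c := by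
    have := inner_orthogonalProjection_eq_of_mem_left (K := U) ⟨x, hx⟩ r
    rw [Submodule.coe_inner] at this
    exact this
  have hxx : ⟪x, x⟫ = 1 := by
    rw [real_inner_self_eq_norm_sq, hx1]; norm_num
  rw [proj_inf_orthogonal_singleton U x hx hx1 r, ← huu, ← hc]
  have hdecomp : u = (u - c • x) + c • x := by abel
  have hinner : ⟪u - c • x, c • x⟫ = 0 := by
    have h : ⟪u, x⟫ = c := by rw [← hxu]; exact real_inner_comm _ _
    rw [real_inner_smul_right, inner_sub_left, real_inner_smul_left, h, hxx]
    ring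
  have hnc : ‖c • x‖ ^ 2 = c ^ 2 := by
    rw [norm_smul, hx1, Real.norm_eq_abs, mul_pow, sq_abs]
    ring
  calc ‖u‖ ^ 2 = ‖(u - c • x) + c • x‖ ^ 2 := by rw [← hdecomp]
  _ = ‖u - c • x‖ ^ 2 + 2 * ⟪u - c • x, c • x⟫ + ‖c • x‖ ^ 2 := norm_add_sq_real _ _
  _ = ‖u - c • x‖ ^ 2 + c ^ 2 := by rw [hinner, hnc]; ring

end Geometry

variable {n m : ℕ}

noncomputable def row (A : Matrix (Fin n) (Fin m) ℝ) (i : Fin n) : EuclideanSpace ℝ (Fin m) :=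
  (WithLp.equiv 2 (Fin m → ℝ)).symm (A i)

noncomputable def mv (A : Matrix (Fin n) (Fin m) ℝ) (x : EuclideanSpace ℝ (Fin m)) :
    EuclideanSpace ℝ (Fin n) :=
  (WithLp.equiv 2 (Fin n → ℝ)).symm (A.mulVec ((WithLp.equiv 2 (Fin m → ℝ)) x))

lemma row_apply (A : Matrix (Fin n) (Fin m) ℝ) (i : Fin n) (j : Fin m) : row A i j = A i j := rfl

lemma mv_apply (A : Matrix (Fin n) (Fin m) ℝ) (x : EuclideanSpace ℝ (Fin m)) (i : Fin n) :
    mv A x i = A.mulVec x i := rfl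

lemma inner_row (A : Matrix (Fin n) (Fin m) ℝ) (x : EuclideanSpace ℝ (Fin m)) (i : Fin n) :
    ⟪row A i, x⟫ = A.mulVec x i := by
  simp [PiLp.inner_apply, row, Matrix.mulVec, dotProduct, RCLike.inner_apply, mul_comm]

def frobSq (A : Matrix (Fin n) (Fin m) ℝ) : ℝ := ∑ i, ∑ j, (A i j) ^ 2

lemma frobSq_nonneg (A : Matrix (Fin n) (Fin m) ℝ) : 0 ≤ frobSq A :=
  Finset.sum_nonneg fun _ _ => Finset.sum_nonneg fun _ _ => sq_nonneg _

lemma frobNorm_sq (A : Matrix (Fin n) (Fin m) ℝ) : frobNorm A ^ 2 = frobSq A :=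
  Real.sq_sqrt (frobSq_nonneg A)

lemma frobNorm_nonneg (A : Matrix (Fin n) (Fin m) ℝ) : 0 ≤ frobNorm A := Real.sqrt_nonneg _

lemma frobSq_le_of_frobNorm_le {A B : Matrix (Fin n) (Fin m) ℝ} (h : frobNorm A ≤ frobNorm B) :
    frobSq A ≤ frobSq B := by
  rw [← frobNorm_sq, ← frobNorm_sq]
  exact pow_le_pow_left₀ (frobNorm_nonneg A) h 2

lemma frobNorm_le_of_frobSq_le {A B : Matrix (Fin n) (Fin m) ℝ} (h : frobSq A ≤ frobSq B) :
    frobNorm A ≤ frobNorm B := Real.sqrt_le_sqrt h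

lemma norm_eucl_sq {k : ℕ} (x : EuclideanSpace ℝ (Fin k)) : ‖x‖ ^ 2 = ∑ j, (x j) ^ 2 := by
  rw [EuclideanSpace.norm_eq, Real.sq_sqrt (Finset.sum_nonneg fun _ _ => sq_nonneg _)]
  simp [sq_abs]

lemma norm_eucl (x : EuclideanSpace ℝ (Fin m)) : ‖x‖ = Real.sqrt (∑ j, (x j) ^ 2) := by
  rw [← norm_eucl_sq, Real.sqrt_sq (norm_nonneg x)]

lemma frobSq_eq_sum_norm_row (A : Matrix (Fin n) (Fin m) ℝ) :
    frobSq A = ∑ i, ‖row A i‖ ^ 2 := by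
  simp [frobSq, norm_eucl_sq, row_apply]

lemma norm_mv_sq (A : Matrix (Fin n) (Fin m) ℝ) (x : EuclideanSpace ℝ (Fin m)) :
    ‖mv A x‖ ^ 2 = ∑ i, (A.mulVec x i) ^ 2 := by
  rw [norm_eucl_sq]; rfl

lemma row_sub (A B : Matrix (Fin n) (Fin m) ℝ) (i : Fin n) :
    row (A - B) i = row A i - row B i := rfl

lemma specNorm_eq (A : Matrix (Fin n) (Fin m) ℝ) :
    specNorm A = ⨆ x : {x : Fin m → ℝ // ∑ j, (x j) ^ 2 ≤ 1}, ‖mv A (WithLp.toLp 2 x.1)‖ := by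
  unfold specNorm
  congr 1
  funext x
  rw [norm_eucl]; rfl

lemma norm_mv_le_sqrt_frobSq (A : Matrix (Fin n) (Fin m) ℝ) (x : EuclideanSpace ℝ (Fin m))
    (hx : ∑ j, (x j) ^ 2 ≤ 1) : ‖mv A x‖ ≤ Real.sqrt (∑ i, ∑ j, (A i j) ^ 2) := by
  rw [← Real.sqrt_sq (norm_nonneg (mv A x))]
  apply Real.sqrt_le_sqrt
  rw [norm_mv_sq]
  have : ∀ i, (A.mulVec x i) ^ 2 ≤ ∑ j, (A i j) ^ 2 := by
    intro i
    calc (A.mulVec x i) ^ 2 = (∑ j, A i j * x j) ^ 2 := rfl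
    _ ≤ (∑ j, (A i j) ^ 2) * ∑ j, (x j) ^ 2 := Finset.sum_mul_sq_le_sq_mul_sq _ _ _
    _ ≤ (∑ j, (A i j) ^ 2) * 1 :=
        mul_le_mul_of_nonneg_left hx (Finset.sum_nonneg fun _ _ => sq_nonneg _)
    _ = ∑ j, (A i j) ^ 2 := mul_one _
  exact Finset.sum_le_sum fun i _ => this i

lemma bddAbove_spec (A : Matrix (Fin n) (Fin m) ℝ) :
    BddAbove (Set.range fun x : {x : Fin m → ℝ // ∑ j, (x j) ^ 2 ≤ 1} => ‖mv A (WithLp.toLp 2 x.1)‖) := by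
  refine ⟨Real.sqrt (∑ i, ∑ j, (A i j) ^ 2), ?_⟩
  rintro y ⟨x, rfl⟩
  exact norm_mv_le_sqrt_frobSq A (WithLp.toLp 2 x.1) x.2

lemma norm_mv_le_specNorm_of_le_one (A : Matrix (Fin n) (Fin m) ℝ) (x : EuclideanSpace ℝ (Fin m))
    (hx : ∑ j, (x j) ^ 2 ≤ 1) : ‖mv A x‖ ≤ specNorm A := by
  rw [specNorm_eq]
  exact le_ciSup (bddAbove_spec A) (⟨x, hx⟩ : {x : Fin m → ℝ // ∑ j, (x j) ^ 2 ≤ 1})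

lemma specNorm_nonneg (A : Matrix (Fin n) (Fin m) ℝ) : 0 ≤ specNorm A :=
  le_trans (norm_nonneg _) (norm_mv_le_specNorm_of_le_one A 0 (by simp))

lemma mv_smul (A : Matrix (Fin n) (Fin m) ℝ) (c : ℝ) (x : EuclideanSpace ℝ (Fin m)) :
    mv A (c • x) = c • mv A x := by
  ext i
  show A.mulVec (c • _) i = c * A.mulVec _ i
  rw [Matrix.mulVec_smul]
  rfl

lemma mv_zero (A : Matrix (Fin n) (Fin m) ℝ) : mv A 0 = 0 := by
  simpa using mv_smul A 0 0

lemma norm_mv_le (A : Matrix (Fin n) (Fin m) ℝ) (x : EuclideanSpace ℝ (Fin m)) :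
    ‖mv A x‖ ≤ specNorm A * ‖x‖ := by
  rcases eq_or_ne x 0 with rfl | hx
  · simp [mv_zero]
  · have hxn : (0:ℝ) < ‖x‖ := norm_pos_iff.mpr hx
    have h1 : ∑ j, ((‖x‖⁻¹ • x : EuclideanSpace ℝ (Fin m)) j) ^ 2 ≤ 1 := by
      rw [← norm_eucl_sq, norm_smul]
      simp [abs_of_nonneg (le_of_lt (inv_pos.mpr hxn)), inv_mul_cancel₀ (ne_of_gt hxn)]
    have := norm_mv_le_specNorm_of_le_one A (‖x‖⁻¹ • x) h1
    rw [mv_smul, norm_smul] at this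
    have h2 : ‖x‖ * (‖(‖x‖⁻¹ : ℝ)‖ * ‖mv A x‖) ≤ ‖x‖ * specNorm A :=
      mul_le_mul_of_nonneg_left this (le_of_lt hxn)
    rw [Real.norm_eq_abs, abs_of_nonneg (le_of_lt (inv_pos.mpr hxn)), ← mul_assoc,
      mul_inv_cancel₀ (ne_of_gt hxn), one_mul] at h2
    linarith [h2]

lemma specNorm_le (A : Matrix (Fin n) (Fin m) ℝ) (c : ℝ)
    (h : ∀ x : EuclideanSpace ℝ (Fin m), ‖x‖ ≤ 1 → ‖mv A x‖ ≤ c) : specNorm A ≤ c := by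
  rw [specNorm_eq]
  have : Nonempty {x : Fin m → ℝ // ∑ j, (x j) ^ 2 ≤ 1} := ⟨⟨0, by simp⟩⟩
  apply ciSup_le
  intro x
  apply h
  refine le_trans (le_of_eq (norm_eucl _)) ?_
  exact le_trans (Real.sqrt_le_sqrt x.2) (le_of_eq Real.sqrt_one)

noncomputable def rowSpan (A : Matrix (Fin n) (Fin m) ℝ) :
    Submodule ℝ (EuclideanSpace ℝ (Fin m)) := span ℝ (Set.range (row A))

lemma finrank_rowSpan (A : Matrix (Fin n) (Fin m) ℝ) :
    finrank ℝ (rowSpan A) = A.rank := by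
  rw [Matrix.rank_eq_finrank_span_row]
  let e : (Fin m → ℝ) ≃ₗ[ℝ] EuclideanSpace ℝ (Fin m) :=
    (WithLp.linearEquiv 2 ℝ (Fin m → ℝ)).symm
  have h1 : rowSpan A = Submodule.map (e : (Fin m → ℝ) →ₗ[ℝ] EuclideanSpace ℝ (Fin m)) (span ℝ (Set.range A.row)) := by
    rw [Submodule.map_span, ← Set.range_comp]
    rfl
  rw [h1]
  exact LinearEquiv.finrank_map_eq e _

lemma rank_le_of_rows_mem (A : Matrix (Fin n) (Fin m) ℝ)
    (S : Submodule ℝ (EuclideanSpace ℝ (Fin m))) (h : ∀ i, row A i ∈ S) :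
    A.rank ≤ finrank ℝ S := by
  rw [← finrank_rowSpan]
  exact Submodule.finrank_mono (span_le.mpr (Set.range_subset_iff.mpr h))

noncomputable def kerE (θ : Matrix (Fin n) (Fin m) ℝ) :
    Submodule ℝ (EuclideanSpace ℝ (Fin m)) :=
  LinearMap.ker (θ.mulVecLin ∘ₗ (WithLp.linearEquiv 2 ℝ (Fin m → ℝ)).toLinearMap)

lemma mem_kerE {θ : Matrix (Fin n) (Fin m) ℝ} {x : EuclideanSpace ℝ (Fin m)} :
    x ∈ kerE θ ↔ θ.mulVec x = 0 := Iff.rfl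

lemma finrank_kerE_ge (θ : Matrix (Fin n) (Fin m) ℝ) (hθ : θ.rank ≤ 2) :
    m - 2 ≤ finrank ℝ (kerE θ) := by
  classical
  set f := θ.mulVecLin ∘ₗ (WithLp.linearEquiv 2 ℝ (Fin m → ℝ)).toLinearMap with hf
  have h1 : finrank ℝ (LinearMap.range f) + finrank ℝ (LinearMap.ker f) =
      finrank ℝ (EuclideanSpace ℝ (Fin m)) := LinearMap.finrank_range_add_finrank_ker f
  have h2 : LinearMap.range f = LinearMap.range θ.mulVecLin := by
    rw [hf, LinearMap.range_comp, LinearEquiv.range, Submodule.map_top]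
  have h3 : finrank ℝ (LinearMap.range f) ≤ 2 := by
    rw [h2]; exact hθ
  have h4 : finrank ℝ (EuclideanSpace ℝ (Fin m)) = m := finrank_euclideanSpace_fin
  have h5 : finrank ℝ (kerE θ) = finrank ℝ (LinearMap.ker f) := rfl
  omega

/-- Matrix whose rows are projections of rows of `A` onto `S`. -/
noncomputable def prj (S : Submodule ℝ (EuclideanSpace ℝ (Fin m)))
    (A : Matrix (Fin n) (Fin m) ℝ) : Matrix (Fin n) (Fin m) ℝ :=
  fun i j => (orthogonalProjection S (row A i) : EuclideanSpace ℝ (Fin m)) j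

lemma row_prj (S : Submodule ℝ (EuclideanSpace ℝ (Fin m))) (A : Matrix (Fin n) (Fin m) ℝ)
    (i : Fin n) : row (prj S A) i = (orthogonalProjection S (row A i) : EuclideanSpace ℝ (Fin m)) :=
  rfl

lemma rank_prj_le (S : Submodule ℝ (EuclideanSpace ℝ (Fin m))) (A : Matrix (Fin n) (Fin m) ℝ) :
    (prj S A).rank ≤ finrank ℝ S :=
  rank_le_of_rows_mem _ S fun i => by rw [row_prj]; exact coe_mem _

noncomputable def g (S : Submodule ℝ (EuclideanSpace ℝ (Fin m))) (A : Matrix (Fin n) (Fin m) ℝ) :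
    ℝ := ∑ i, ‖(orthogonalProjection S (row A i) : EuclideanSpace ℝ (Fin m))‖ ^ 2

lemma frobSq_sub_pyth (S : Submodule ℝ (EuclideanSpace ℝ (Fin m))) (A C : Matrix (Fin n) (Fin m) ℝ)
    (hC : ∀ i, row C i ∈ S) :
    frobSq (A - C) = frobSq (A - prj S A) +
      ∑ i, ‖(orthogonalProjection S (row A i) : EuclideanSpace ℝ (Fin m)) - row C i‖ ^ 2 := by
  rw [frobSq_eq_sum_norm_row, frobSq_eq_sum_norm_row, ← Finset.sum_add_distrib]
  refine Finset.sum_congr rfl fun i _ => ?_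
  rw [row_sub, row_sub, row_prj]
  exact norm_sub_proj_sq S (row A i) (row C i) (hC i)

lemma frobSq_sub_prj (S : Submodule ℝ (EuclideanSpace ℝ (Fin m))) (A : Matrix (Fin n) (Fin m) ℝ) :
    frobSq (A - prj S A) = frobSq A - g S A := by
  rw [frobSq_eq_sum_norm_row, frobSq_eq_sum_norm_row, g, ← Finset.sum_sub_distrib]
  refine Finset.sum_congr rfl fun i _ => ?_
  rw [row_sub, row_prj]
  have := norm_proj_sq_add S (row A i)
  linarith

lemma g_eq_sum {ι : Type*} [Fintype ι] (S : Submodule ℝ (EuclideanSpace ℝ (Fin m)))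
    (b : OrthonormalBasis ι ℝ S) (A : Matrix (Fin n) (Fin m) ℝ) :
    g S A = ∑ k, ‖mv A (b k : EuclideanSpace ℝ (Fin m))‖ ^ 2 := by
  unfold g
  have h1 : ∀ i, ‖(orthogonalProjection S (row A i) : EuclideanSpace ℝ (Fin m))‖ ^ 2 =
      ∑ k, ⟪((b k : EuclideanSpace ℝ (Fin m))), row A i⟫ ^ 2 := fun i =>
    norm_proj_sq_eq_sum S b (row A i)
  simp_rw [h1]
  rw [Finset.sum_comm]
  refine Finset.sum_congr rfl fun k _ => ?_
  rw [norm_mv_sq]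
  refine Finset.sum_congr rfl fun i _ => ?_
  have : ⟪(b k : EuclideanSpace ℝ (Fin m)), row A i⟫ = ⟪row A i, (b k : EuclideanSpace ℝ (Fin m))⟫ :=
    real_inner_comm _ _
  rw [this, inner_row]

lemma g_mono {S T : Submodule ℝ (EuclideanSpace ℝ (Fin m))} (h : S ≤ T)
    (A : Matrix (Fin n) (Fin m) ℝ) : g S A ≤ g T A := by
  refine Finset.sum_le_sum fun i _ => ?_
  exact pow_le_pow_left₀ (norm_nonneg _) (norm_proj_mono h _) 2

lemma g_split (U : Submodule ℝ (EuclideanSpace ℝ (Fin m))) (x : EuclideanSpace ℝ (Fin m))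
    (hx : x ∈ U) (hx1 : ‖x‖ = 1) (A : Matrix (Fin n) (Fin m) ℝ) :
    g U A = g (U ⊓ (ℝ ∙ x)ᗮ) A + ‖mv A x‖ ^ 2 := by
  unfold g
  rw [norm_mv_sq, ← Finset.sum_add_distrib]
  refine Finset.sum_congr rfl fun i _ => ?_
  rw [norm_proj_split U x hx hx1 (row A i)]
  have : ⟪x, row A i⟫ = A.mulVec x i := by
    rw [real_inner_comm]; exact inner_row A x i
  rw [this]

lemma g_eq_frobSq_of_rows_mem (S : Submodule ℝ (EuclideanSpace ℝ (Fin m)))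
    (A : Matrix (Fin n) (Fin m) ℝ) (h : ∀ i, row A i ∈ S) : g S A = frobSq A := by
  rw [frobSq_eq_sum_norm_row]
  refine Finset.sum_congr rfl fun i _ => ?_
  congr 2
  exact congrArg Subtype.val (orthogonalProjection_mem_subspace_eq_self (⟨row A i, h i⟩ : S))

lemma specNorm_sub_comm (A B : Matrix (Fin n) (Fin m) ℝ) :
    specNorm (A - B) = specNorm (B - A) := by
  unfold specNorm
  congr 1
  funext x
  congr 1
  refine Finset.sum_congr rfl fun i _ => ?_
  have : (A - B).mulVec x.1 i = -((B - A).mulVec x.1 i) := by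
    rw [Matrix.sub_mulVec, Matrix.sub_mulVec]
    simp
  rw [this]
  ring

noncomputable def flat (A : Matrix (Fin n) (Fin m) ℝ) : EuclideanSpace ℝ (Fin n × Fin m) :=
  (WithLp.equiv 2 (Fin n × Fin m → ℝ)).symm (fun p => A p.1 p.2)

lemma frobNorm_eq_flat (A : Matrix (Fin n) (Fin m) ℝ) : frobNorm A = ‖flat A‖ := by
  rw [EuclideanSpace.norm_eq, frobNorm]
  congr 1
  rw [Fintype.sum_prod_type]
  refine Finset.sum_congr rfl fun i _ => Finset.sum_congr rfl fun j _ => ?_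
  simp [flat, sq_abs]

lemma flat_sub (A B : Matrix (Fin n) (Fin m) ℝ) : flat (A - B) = flat A - flat B := rfl

lemma frobNorm_triangle (A B C : Matrix (Fin n) (Fin m) ℝ) :
    frobNorm (A - C) ≤ frobNorm (A - B) + frobNorm (B - C) := by
  rw [frobNorm_eq_flat, frobNorm_eq_flat, frobNorm_eq_flat, flat_sub, flat_sub, flat_sub]
  exact norm_sub_le_norm_sub_add_norm_sub _ _ _

lemma frobNorm_sub_comm (A B : Matrix (Fin n) (Fin m) ℝ) :
    frobNorm (A - B) = frobNorm (B - A) := by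
  unfold frobNorm
  congr 1
  refine Finset.sum_congr rfl fun i _ => Finset.sum_congr rfl fun j _ => ?_
  have : (A - B) i j = -((B - A) i j) := by simp [Matrix.sub_apply]
  rw [this]
  ring

lemma frobSq_le_card_mul_spec (A : Matrix (Fin n) (Fin m) ℝ) :
    frobSq A ≤ (m : ℝ) * specNorm A ^ 2 := by
  classical
  have hcol : ∀ j : Fin m, ∑ i, (A i j) ^ 2 ≤ specNorm A ^ 2 := by
    intro j
    have hx : ‖(EuclideanSpace.single j (1:ℝ) : EuclideanSpace ℝ (Fin m))‖ = 1 := by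
      simp [EuclideanSpace.norm_single]
    have h1 : ‖mv A (EuclideanSpace.single j (1:ℝ))‖ ≤ specNorm A := by
      have := norm_mv_le A (EuclideanSpace.single j (1:ℝ))
      rw [hx, mul_one] at this
      exact this
    have h2 : ‖mv A (EuclideanSpace.single j (1:ℝ))‖ ^ 2 = ∑ i, (A i j) ^ 2 := by
      rw [norm_mv_sq]
      refine Finset.sum_congr rfl fun i _ => ?_
      congr 1
      show (A.mulVec (Pi.single j 1)) i = A i j
      rw [Matrix.mulVec_single_one]
      rfl
    calc ∑ i, (A i j) ^ 2 = ‖mv A (EuclideanSpace.single j (1:ℝ))‖ ^ 2 := h2.symm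
    _ ≤ specNorm A ^ 2 := pow_le_pow_left₀ (norm_nonneg _) h1 2
  calc frobSq A = ∑ j, ∑ i, (A i j) ^ 2 := Finset.sum_comm
  _ ≤ ∑ _j : Fin m, specNorm A ^ 2 := Finset.sum_le_sum fun j _ => hcol j
  _ = (m : ℝ) * specNorm A ^ 2 := by simp [Finset.sum_const, mul_comm]

lemma spec_triangle (A B C : Matrix (Fin n) (Fin m) ℝ) :
    specNorm (A - C) ≤ specNorm (A - B) + specNorm (B - C) := by
  apply specNorm_le
  intro x hx
  have hmv : mv (A - C) x = mv (A - B) x + mv (B - C) x := by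
    ext i
    show (A - C).mulVec x i = (A - B).mulVec x i + (B - C).mulVec x i
    rw [Matrix.sub_mulVec, Matrix.sub_mulVec, Matrix.sub_mulVec]
    simp
  rw [hmv]
  refine le_trans (norm_add_le _ _) (add_le_add ?_ ?_) <;>
  · refine le_trans (norm_mv_le _ _) ?_
    exact mul_le_of_le_one_right (specNorm_nonneg _) hx

namespace KeyPart
open Submodule Matrix Module RealInnerProductSpace

variable {n m : ℕ}

lemma frobSq_le_four_sq_spec (θ ϑ₂ : Matrix (Fin n) (Fin m) ℝ)
    (hθ : θ.rank ≤ 2) (hϑ₂ : ϑ₂.rank ≤ 2) :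
    frobSq (θ - ϑ₂) ≤ 4 * specNorm (θ - ϑ₂) ^ 2 := by
  classical
  set B := θ - ϑ₂ with hB
  have hrows : ∀ i, row B i ∈ rowSpan θ ⊔ rowSpan ϑ₂ := fun i => by
    rw [hB, row_sub]
    exact sub_mem (Submodule.mem_sup_left (subset_span (Set.mem_range_self i)))
      (Submodule.mem_sup_right (subset_span (Set.mem_range_self i)))
  have hfr4 : finrank ℝ (rowSpan B) ≤ 4 := by
    have hle : rowSpan B ≤ rowSpan θ ⊔ rowSpan ϑ₂ :=
      span_le.mpr (Set.range_subset_iff.mpr hrows)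
    have h1 := Submodule.finrank_mono hle
    have h2 := Submodule.finrank_sup_add_finrank_inf_eq (rowSpan θ) (rowSpan ϑ₂)
    have h3 : finrank ℝ (rowSpan θ) ≤ 2 := by rw [finrank_rowSpan]; exact hθ
    have h4 : finrank ℝ (rowSpan ϑ₂) ≤ 2 := by rw [finrank_rowSpan]; exact hϑ₂
    omega
  have hfr : frobSq B = g (rowSpan B) B :=
    (g_eq_frobSq_of_rows_mem _ _ fun i => subset_span (Set.mem_range_self i)).symm
  set S := rowSpan B with hS
  let b := stdOrthonormalBasis ℝ S
  rw [hfr, g_eq_sum S b]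
  have hone : ∀ k, ‖((b k : EuclideanSpace ℝ (Fin m)))‖ = 1 := fun k => b.orthonormal.1 k
  have hterm : ∀ k, ‖mv B (b k : EuclideanSpace ℝ (Fin m))‖ ^ 2 ≤ specNorm B ^ 2 := fun k => by
    refine pow_le_pow_left₀ (norm_nonneg _) ?_ 2
    have := norm_mv_le B (b k : EuclideanSpace ℝ (Fin m))
    rw [hone k, mul_one] at this
    exact this
  calc ∑ k, ‖mv B (b k : EuclideanSpace ℝ (Fin m))‖ ^ 2
      ≤ ∑ _k : Fin (finrank ℝ S), specNorm B ^ 2 := Finset.sum_le_sum fun k _ => hterm k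
  _ = (finrank ℝ S : ℝ) * specNorm B ^ 2 := by simp [Finset.sum_const, mul_comm]
  _ ≤ 4 * specNorm B ^ 2 := by
      have : (finrank ℝ S : ℝ) ≤ 4 := by exact_mod_cast hfr4
      exact mul_le_mul_of_nonneg_right this (sq_nonneg _)

set_option maxHeartbeats 1000000 in
lemma spec_key (hm : 3 ≤ m) (θ ϑ ϑ₂ : Matrix (Fin n) (Fin m) ℝ)
    (hθ : θ.rank ≤ 2) (hϑ₂ : ϑ₂.rank ≤ 2)
    (hbest : ∀ M : Matrix (Fin n) (Fin m) ℝ, M.rank ≤ 2 →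
      frobNorm (ϑ - ϑ₂) ≤ frobNorm (ϑ - M)) :
    specNorm (ϑ - ϑ₂) ≤ specNorm (ϑ - θ) := by
  classical
  have hs0 : 0 ≤ specNorm (ϑ - θ) := specNorm_nonneg _
  set s := specNorm (ϑ - θ) with hs
  set W₀ := rowSpan ϑ₂ with hW₀
  have hfW₀ : finrank ℝ W₀ ≤ 2 := by rw [hW₀, finrank_rowSpan]; exact hϑ₂
  have hrowsϑ₂ : ∀ i, row ϑ₂ i ∈ W₀ := fun i => subset_span (Set.mem_range_self i)
  have hb0 : frobSq (ϑ - ϑ₂) ≤ frobSq (ϑ - prj W₀ ϑ) :=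
    frobSq_le_of_frobNorm_le (hbest _ (le_trans (rank_prj_le W₀ ϑ) hfW₀))
  have hpy := frobSq_sub_pyth W₀ ϑ ϑ₂ hrowsϑ₂
  have hzero : ∀ i,
      (orthogonalProjection W₀ (row ϑ i) : EuclideanSpace ℝ (Fin m)) = row ϑ₂ i := by
    have hnn : ∀ k ∈ Finset.univ, (0:ℝ) ≤
        ‖(orthogonalProjection W₀ (row ϑ k) : EuclideanSpace ℝ (Fin m)) - row ϑ₂ k‖ ^ 2 :=
      fun k _ => sq_nonneg _
    have hsum : ∑ i, ‖(orthogonalProjection W₀ (row ϑ i) : EuclideanSpace ℝ (Fin m)) -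
        row ϑ₂ i‖ ^ 2 ≤ 0 := by linarith
    intro i
    have hterm := (Finset.sum_eq_zero_iff_of_nonneg hnn).mp
      (le_antisymm hsum (Finset.sum_nonneg hnn)) i (Finset.mem_univ i)
    have h0 := norm_eq_zero.mp (pow_eq_zero_iff (n := 2) (by norm_num) |>.mp hterm)
    exact sub_eq_zero.mp h0
  have hϑ₂eq : ϑ₂ = prj W₀ ϑ := by
    ext i j
    have h := hzero i
    have hj : (orthogonalProjection W₀ (row ϑ i) : EuclideanSpace ℝ (Fin m)) j = row ϑ₂ i j := by
      rw [h]
    exact hj.symm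
  -- Claim: any unit vector orthogonal to `W₀` is mapped by `ϑ` to something of norm ≤ s
  have hB2 : ∀ y : EuclideanSpace ℝ (Fin m), ‖y‖ = 1 → y ∈ W₀ᗮ → ‖mv ϑ y‖ ≤ s := by
    intro y hy1 hyW
    by_contra hcon
    push_neg at hcon
    have hker : 1 ≤ finrank ℝ (kerE θ) := le_trans (by omega) (finrank_kerE_ge θ hθ)
    have hy0 : y ≠ 0 := fun h => by rw [h] at hy1; simp at hy1
    obtain ⟨U, hW₀U, hyU, hU3, v₀, hv₀U, hv₀ker, hv₀ne⟩ :
        ∃ U : Submodule ℝ (EuclideanSpace ℝ (Fin m)), W₀ ≤ U ∧ y ∈ U ∧ finrank ℝ U ≤ 3 ∧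
          ∃ v₀ : EuclideanSpace ℝ (Fin m), v₀ ∈ U ∧ θ.mulVec v₀ = 0 ∧ v₀ ≠ 0 := by
      by_cases hdim : finrank ℝ W₀ = 2
      · refine ⟨W₀ ⊔ (ℝ ∙ y), le_sup_left,
          Submodule.mem_sup_right (mem_span_singleton_self y), ?_, ?_⟩
        · have hinf : W₀ ⊓ (ℝ ∙ y) = ⊥ := by
            rw [eq_bot_iff]
            rintro w hw
            obtain ⟨hw1, hw2⟩ := Submodule.mem_inf.mp hw
            obtain ⟨c, rfl⟩ := mem_span_singleton.mp hw2
            have hz : ⟪c • y, y⟫ = 0 := (Submodule.mem_orthogonal W₀ y).mp hyW _ hw1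
            have hz2 : ⟪c • y, c • y⟫ = 0 := by
              rw [real_inner_smul_right, hz, mul_zero]
            have : c • y = 0 := inner_self_eq_zero.mp hz2
            simp [this]
          have hs1 : finrank ℝ (ℝ ∙ y) = 1 := finrank_span_singleton hy0
          have hq := Submodule.finrank_sup_add_finrank_inf_eq W₀ (ℝ ∙ y)
          rw [hinf] at hq
          simp only [finrank_bot] at hq
          omega
        · -- find v₀ by dimension count
          have h2 := Submodule.finrank_sup_add_finrank_inf_eq (W₀ ⊔ (ℝ ∙ y)) (kerE θ)
          have h3 : finrank ℝ ↥((W₀ ⊔ (ℝ ∙ y)) ⊔ kerE θ) ≤ m := by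
            have := Submodule.finrank_le ((W₀ ⊔ (ℝ ∙ y)) ⊔ kerE θ)
            rwa [finrank_euclideanSpace_fin] at this
          have hkge := finrank_kerE_ge θ hθ
          have hUeq : finrank ℝ ↥(W₀ ⊔ (ℝ ∙ y)) = 3 := by
            have hinf : W₀ ⊓ (ℝ ∙ y) = ⊥ := by
              rw [eq_bot_iff]
              rintro w hw
              obtain ⟨hw1, hw2⟩ := Submodule.mem_inf.mp hw
              obtain ⟨c, rfl⟩ := mem_span_singleton.mp hw2
              have hz : ⟪c • y, y⟫ = 0 := (Submodule.mem_orthogonal W₀ y).mp hyW _ hw1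
              have hz2 : ⟪c • y, c • y⟫ = 0 := by
                rw [real_inner_smul_right, hz, mul_zero]
              have : c • y = 0 := inner_self_eq_zero.mp hz2
              simp [this]
            have hs1 : finrank ℝ (ℝ ∙ y) = 1 := finrank_span_singleton hy0
            have hq := Submodule.finrank_sup_add_finrank_inf_eq W₀ (ℝ ∙ y)
            rw [hinf] at hq
            simp only [finrank_bot] at hq
            omega
          have hpos : 0 < finrank ℝ ↥((W₀ ⊔ (ℝ ∙ y)) ⊓ kerE θ) := by omega
          obtain ⟨w, hwne⟩ := Module.finrank_pos_iff_exists_ne_zero.mp hpos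
          refine ⟨w.1, (Submodule.mem_inf.mp w.2).1,
            mem_kerE.mp (Submodule.mem_inf.mp w.2).2, ?_⟩
          intro h
          exact hwne (Subtype.ext h)
      · -- finrank W₀ ≤ 1
        obtain ⟨z, hzne⟩ := Module.finrank_pos_iff_exists_ne_zero.mp
          (lt_of_lt_of_le zero_lt_one hker)
        have hz1 : (z : EuclideanSpace ℝ (Fin m)) ≠ 0 := fun h => hzne (Subtype.ext h)
        refine ⟨(W₀ ⊔ (ℝ ∙ y)) ⊔ (ℝ ∙ (z : EuclideanSpace ℝ (Fin m))),
          le_trans le_sup_left le_sup_left,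
          Submodule.mem_sup_left (Submodule.mem_sup_right (mem_span_singleton_self y)), ?_,
          z.1, Submodule.mem_sup_right (mem_span_singleton_self _), mem_kerE.mp z.2, hz1⟩
        have hq1 := Submodule.finrank_sup_add_finrank_inf_eq (W₀ ⊔ (ℝ ∙ y))
          (ℝ ∙ (z : EuclideanSpace ℝ (Fin m)))
        have hq2 := Submodule.finrank_sup_add_finrank_inf_eq W₀ (ℝ ∙ y)
        have hs1 : finrank ℝ (ℝ ∙ y) = 1 := finrank_span_singleton hy0
        have hs2 : finrank ℝ (ℝ ∙ (z : EuclideanSpace ℝ (Fin m))) = 1 :=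
          finrank_span_singleton hz1
        omega
    -- normalize v₀
    set v : EuclideanSpace ℝ (Fin m) := ‖v₀‖⁻¹ • v₀ with hv
    have hvU : v ∈ U := smul_mem _ _ hv₀U
    have hv1 : ‖v‖ = 1 := norm_smul_inv_norm hv₀ne
    have hvker : θ.mulVec v = 0 := by
      show θ.mulVec (‖v₀‖⁻¹ • v₀) = 0
      rw [Matrix.mulVec_smul, hv₀ker, smul_zero]
    have hsmall : ‖mv ϑ v‖ ≤ s := by
      have hmveq : mv ϑ v = mv (ϑ - θ) v := by
        ext i
        show ϑ.mulVec v i = (ϑ - θ).mulVec v i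
        rw [Matrix.sub_mulVec]
        simp [hvker]
      rw [hmveq]
      have := norm_mv_le (ϑ - θ) v
      rw [hv1, mul_one] at this
      exact this
    have hsplit1 := g_split U v hvU hv1 ϑ
    have hsplit2 := g_split U y hyU hy1 ϑ
    have hmono : g W₀ ϑ ≤ g (U ⊓ (ℝ ∙ y)ᗮ) ϑ := by
      refine g_mono (le_inf hW₀U fun w hw => ?_) ϑ
      rw [mem_orthogonal_singleton_iff_inner_right]
      rw [real_inner_comm]
      exact (Submodule.mem_orthogonal W₀ y).mp hyW _ hw
    have hWfin : finrank ℝ ↥(U ⊓ (ℝ ∙ v)ᗮ) ≤ 2 := by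
      have hvnot : v ∉ U ⊓ (ℝ ∙ v)ᗮ := by
        intro h
        have h1 := mem_orthogonal_singleton_iff_inner_right.mp (Submodule.mem_inf.mp h).2
        have h2 : v = 0 := inner_self_eq_zero.mp h1
        rw [h2] at hv1
        simp at hv1
      have hlt : U ⊓ (ℝ ∙ v)ᗮ < U := lt_of_le_of_ne inf_le_left fun h => hvnot (by rw [h]; exact hvU)
      have := Submodule.finrank_lt_finrank_of_lt hlt
      omega
    have h1 : ‖mv ϑ v‖ ^ 2 ≤ s ^ 2 := pow_le_pow_left₀ (norm_nonneg _) hsmall 2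
    have h2 : s ^ 2 < ‖mv ϑ y‖ ^ 2 := by nlinarith [hs0, hcon]
    have hgW' : g W₀ ϑ < g (U ⊓ (ℝ ∙ v)ᗮ) ϑ := by linarith
    have hb1 : frobSq (ϑ - ϑ₂) ≤ frobSq (ϑ - prj (U ⊓ (ℝ ∙ v)ᗮ) ϑ) :=
      frobSq_le_of_frobNorm_le (hbest _ (le_trans (rank_prj_le _ ϑ) hWfin))
    have e1 : frobSq (ϑ - prj (U ⊓ (ℝ ∙ v)ᗮ) ϑ) = frobSq ϑ - g (U ⊓ (ℝ ∙ v)ᗮ) ϑ :=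
      frobSq_sub_prj _ _
    have e2 : frobSq (ϑ - ϑ₂) = frobSq ϑ - g W₀ ϑ := by
      nth_rewrite 1 [hϑ₂eq]
      exact frobSq_sub_prj _ _
    linarith
  -- conclude
  apply specNorm_le
  intro x hx
  set Px := (orthogonalProjection W₀ x : EuclideanSpace ℝ (Fin m)) with hPx
  set y₀ : EuclideanSpace ℝ (Fin m) := x - Px with hy₀
  have hmv : mv (ϑ - ϑ₂) x = mv ϑ y₀ := by
    ext i
    show (ϑ - ϑ₂).mulVec x i = ϑ.mulVec y₀ i
    rw [hϑ₂eq, Matrix.sub_mulVec]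
    have h1 : (prj W₀ ϑ).mulVec x i = ⟪row ϑ i, Px⟫ := by
      rw [← inner_row]
      exact inner_starProjection_left_eq_right W₀ (row ϑ i) x
    have h2 : ϑ.mulVec y₀ i = ϑ.mulVec x i - ⟪row ϑ i, Px⟫ := by
      rw [← inner_row, ← inner_row, hy₀, inner_sub_right]
    simp only [Pi.sub_apply]
    rw [h1]
    linarith [h2]
  have hy₀W : y₀ ∈ W₀ᗮ := sub_starProjection_mem_orthogonal x
  have hpyth : ‖x‖ ^ 2 = ‖Px‖ ^ 2 + ‖y₀‖ ^ 2 := norm_proj_sq_add W₀ x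
  clear_value Px y₀
  have hy₀n : ‖y₀‖ ≤ 1 := by
    nlinarith [norm_nonneg Px, norm_nonneg x, hx, norm_nonneg y₀, sq_nonneg (1 - ‖y₀‖)]
  rw [hmv]
  rcases eq_or_ne y₀ 0 with h0 | h0
  · rw [h0, mv_zero]
    simpa using hs0
  · set yu : EuclideanSpace ℝ (Fin m) := ‖y₀‖⁻¹ • y₀ with hyu
    have hyu1 : ‖yu‖ = 1 := norm_smul_inv_norm h0
    have hyuW : yu ∈ W₀ᗮ := smul_mem _ _ hy₀W
    have hyub := hB2 yu hyu1 hyuW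
    have hrec : mv ϑ y₀ = ‖y₀‖ • mv ϑ yu := by
      rw [hyu, mv_smul, smul_smul, mul_inv_cancel₀ (norm_ne_zero_iff.mpr h0), one_smul]
    rw [hrec, norm_smul, Real.norm_eq_abs, abs_of_nonneg (norm_nonneg _)]
    calc ‖y₀‖ * ‖mv ϑ yu‖ ≤ 1 * s := mul_le_mul hy₀n hyub (norm_nonneg _) zero_le_one
    _ = s := one_mul s

end KeyPart
end RankTwoApproxAux

/-- If `θ` has rank at most 2 and `ϑ₂` is a best rank-2 approximation (in
Frobenius norm) of an arbitrary matrix `ϑ`, then `‖θ − ϑ₂‖₂² ≤ 16 ‖θ − ϑ‖²` where the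
right-hand side uses the spectral norm. -/
theorem rank_two_approximation_error
    {n m : ℕ} (θ ϑ ϑ₂ : Matrix (Fin n) (Fin m) ℝ)
    (hθ : θ.rank ≤ 2) (hϑ₂ : ϑ₂.rank ≤ 2)
    (hbest : ∀ M : Matrix (Fin n) (Fin m) ℝ, M.rank ≤ 2 →
      frobNorm (ϑ - ϑ₂) ≤ frobNorm (ϑ - M)) :
    frobNorm (θ - ϑ₂) ^ 2 ≤ 16 * specNorm (θ - ϑ) ^ 2 := by
  open RankTwoApproxAux RankTwoApproxAux.KeyPart in
  have hs0 : 0 ≤ specNorm (θ - ϑ) := specNorm_nonneg _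
  rw [RankTwoApproxAux.frobNorm_sq]
  by_cases hm : 3 ≤ m
  · have hspec1 : specNorm (ϑ - ϑ₂) ≤ specNorm (ϑ - θ) :=
      RankTwoApproxAux.KeyPart.spec_key hm θ ϑ ϑ₂ hθ hϑ₂ hbest
    have hcomm : specNorm (ϑ - θ) = specNorm (θ - ϑ) :=
      RankTwoApproxAux.specNorm_sub_comm _ _
    have htri : specNorm (θ - ϑ₂) ≤ specNorm (θ - ϑ) + specNorm (ϑ - ϑ₂) :=
      RankTwoApproxAux.spec_triangle θ ϑ ϑ₂
    have h2 : specNorm (θ - ϑ₂) ≤ 2 * specNorm (θ - ϑ) := by linarith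
    have h4 : RankTwoApproxAux.frobSq (θ - ϑ₂) ≤ 4 * specNorm (θ - ϑ₂) ^ 2 :=
      RankTwoApproxAux.KeyPart.frobSq_le_four_sq_spec θ ϑ₂ hθ hϑ₂
    have h3 : specNorm (θ - ϑ₂) ^ 2 ≤ (2 * specNorm (θ - ϑ)) ^ 2 :=
      pow_le_pow_left₀ (RankTwoApproxAux.specNorm_nonneg _) h2 2
    nlinarith [h4, h3]
  · have hm2 : (m : ℝ) ≤ 2 := by
      have : m ≤ 2 := by omega
      exact_mod_cast this
    have h1 : frobNorm (θ - ϑ₂) ≤ frobNorm (θ - ϑ) + frobNorm (ϑ - ϑ₂) :=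
      RankTwoApproxAux.frobNorm_triangle θ ϑ ϑ₂
    have h2 : frobNorm (ϑ - ϑ₂) ≤ frobNorm (ϑ - θ) := hbest θ hθ
    have h3 : frobNorm (ϑ - θ) = frobNorm (θ - ϑ) := RankTwoApproxAux.frobNorm_sub_comm _ _
    have h4 : frobNorm (θ - ϑ₂) ≤ 2 * frobNorm (θ - ϑ) := by linarith
    have h5 : RankTwoApproxAux.frobSq (θ - ϑ₂) ≤ 4 * RankTwoApproxAux.frobSq (θ - ϑ) := by
      have h6 := pow_le_pow_left₀ (RankTwoApproxAux.frobNorm_nonneg (θ - ϑ₂)) h4 2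
      rw [RankTwoApproxAux.frobNorm_sq] at h6
      nlinarith [RankTwoApproxAux.frobNorm_sq (θ - ϑ), h6]
    have h6 : RankTwoApproxAux.frobSq (θ - ϑ) ≤ (m : ℝ) * specNorm (θ - ϑ) ^ 2 :=
      RankTwoApproxAux.frobSq_le_card_mul_spec _
    nlinarith [sq_nonneg (specNorm (θ - ϑ)), h5, h6, hm2, hs0]
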